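/- Let γ > 0 and let a < b be real numbers. Then ∫_a^b ∫_a^b (1 + √5·|ω − ω'|/γ + 5·(ω − ω')²/(3γ²)) · exp(−√5·|ω − ω'|/γ) · (b − a)^{-2} dω' dω = 2·(b − a)^{-2} · (8√5·(b − a)·γ − 15γ² + exp(−√5(b − a)/γ)·(5(b − a)² + 7√5·(b − a)·γ + 15γ²)) / 15. -/

import Mathlib

noncomputable def maternK (s t : ℝ) : ℝ :=
  (1 + s * t + s ^ 2 * t ^ 2 / 3) * Real.exp (-(s * t))

noncomputable def maternF (s t : ℝ) : ℝ :=
  8 / (3 * s) - (8 / (3 * s) + 5 * t / 3 + s * t ^ 2 / 3) * Real.exp (-(s * t))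

noncomputable def maternG (s t : ℝ) : ℝ :=
  8 * t / (3 * s) + (5 / s ^ 2 + 7 * t / (3 * s) + t ^ 2 / 3) * Real.exp (-(s * t))

lemma maternExp_hasDerivAt (s t : ℝ) :
    HasDerivAt (fun t : ℝ => Real.exp (-(s * t))) (Real.exp (-(s * t)) * (-s)) t := by
  have h : HasDerivAt (fun t : ℝ => -(s * t)) (-s) t := by
    exact (((hasDerivAt_id t).const_mul s).neg).congr_deriv (by ring)
  exact ((Real.hasDerivAt_exp (-(s * t))).comp t h)

lemma maternF_hasDerivAt (s : ℝ) (hs : s ≠ 0) (t : ℝ) :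
    HasDerivAt (maternF s) (maternK s t) t := by
  have h1 : HasDerivAt (fun t : ℝ => 8 / (3 * s) + 5 * t / 3 + s * t ^ 2 / 3)
      (5 / 3 + s * (2 * t) / 3) t := by
    have := (((hasDerivAt_id t).const_mul (5:ℝ)).div_const 3).const_add (8 / (3 * s))
    have h2 := (((hasDerivAt_pow 2 t).const_mul s).div_const 3)
    exact (this.add h2).congr_deriv (by ring)
  have h3 := ((hasDerivAt_const t (8 / (3 * s))).sub (h1.mul (maternExp_hasDerivAt s t)))
  refine h3.congr_deriv ?_
  unfold maternK
  field_simp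
  ring

lemma maternG_hasDerivAt (s : ℝ) (hs : s ≠ 0) (t : ℝ) :
    HasDerivAt (maternG s) (maternF s t) t := by
  have h0 : HasDerivAt (fun t : ℝ => 8 * t / (3 * s)) (8 / (3 * s)) t := by
    have := ((hasDerivAt_id t).const_mul (8:ℝ)).div_const (3 * s)
    exact this.congr_deriv (by ring)
  have h1 : HasDerivAt (fun t : ℝ => 5 / s ^ 2 + 7 * t / (3 * s) + t ^ 2 / 3)
      (7 / (3 * s) + 2 * t / 3) t := by
    have ha := (((hasDerivAt_id t).const_mul (7:ℝ)).div_const (3 * s)).const_add (5 / s ^ 2)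
    have hb := (hasDerivAt_pow 2 t).div_const 3
    exact (ha.add hb).congr_deriv (by ring)
  have h3 := h0.add (h1.mul (maternExp_hasDerivAt s t))
  refine h3.congr_deriv ?_
  unfold maternF
  field_simp
  ring

lemma maternF_zero (s : ℝ) : maternF s 0 = 0 := by
  simp [maternF]

lemma maternK_cont (s c : ℝ) :
    Continuous (fun x : ℝ => maternK s |c - x|) := by
  unfold maternK
  fun_prop

lemma matern_inner (s a b ω : ℝ) (hs : s ≠ 0) (h1 : a ≤ ω) (h2 : ω ≤ b) :
    (∫ ω' in a..b, maternK s |ω - ω'|) = maternF s (ω - a) + maternF s (b - ω) := by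
  have hi : ∀ u v : ℝ, IntervalIntegrable (fun x => maternK s |ω - x|) MeasureTheory.volume u v :=
    fun u v => (maternK_cont s ω).intervalIntegrable u v
  rw [← intervalIntegral.integral_add_adjacent_intervals (hi a ω) (hi ω b)]
  have e1 : (∫ ω' in a..ω, maternK s |ω - ω'|) = maternF s (ω - a) := by
    have hcong : (∫ ω' in a..ω, maternK s |ω - ω'|) = ∫ ω' in a..ω, maternK s (ω - ω') := by
      apply intervalIntegral.integral_congr
      intro x hx
      rw [Set.uIcc_of_le h1] at hx
      show maternK s |ω - x| = maternK s (ω - x)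
      rw [abs_of_nonneg (by linarith [hx.2])]
    rw [hcong]
    have hd : ∀ x ∈ Set.uIcc a ω, HasDerivAt (fun x => -(maternF s (ω - x))) (maternK s (ω - x)) x := by
      intro x hx
      have h := (maternF_hasDerivAt s hs (ω - x)).comp x ((hasDerivAt_id x).const_sub ω)
      exact h.neg.congr_deriv (by simp)
    have hint : IntervalIntegrable (fun x => maternK s (ω - x)) MeasureTheory.volume a ω := by
      apply Continuous.intervalIntegrable
      unfold maternK
      fun_prop
    rw [intervalIntegral.integral_eq_sub_of_hasDerivAt hd hint]
    simp [maternF_zero]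
  have e2 : (∫ ω' in ω..b, maternK s |ω - ω'|) = maternF s (b - ω) := by
    have hcong : (∫ ω' in ω..b, maternK s |ω - ω'|) = ∫ ω' in ω..b, maternK s (ω' - ω) := by
      apply intervalIntegral.integral_congr
      intro x hx
      rw [Set.uIcc_of_le h2] at hx
      show maternK s |ω - x| = maternK s (x - ω)
      rw [abs_sub_comm, abs_of_nonneg (by linarith [hx.1])]
    rw [hcong]
    have hd : ∀ x ∈ Set.uIcc ω b, HasDerivAt (fun x => maternF s (x - ω)) (maternK s (x - ω)) x := by
      intro x hx
      have h := (maternF_hasDerivAt s hs (x - ω)).comp x ((hasDerivAt_id x).sub_const ω)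
      exact h.congr_deriv (by simp)
    have hint : IntervalIntegrable (fun x => maternK s (x - ω)) MeasureTheory.volume ω b := by
      apply Continuous.intervalIntegrable
      unfold maternK
      fun_prop
    rw [intervalIntegral.integral_eq_sub_of_hasDerivAt hd hint]
    simp [maternF_zero]
  rw [e1, e2]

lemma matern_outer (s a b : ℝ) (hs : s ≠ 0) (hab : a ≤ b) :
    (∫ ω in a..b, maternF s (ω - a) + maternF s (b - ω))
      = 2 * (maternG s (b - a) - maternG s 0) := by
  have hd : ∀ x ∈ Set.uIcc a b,
      HasDerivAt (fun x => maternG s (x - a) - maternG s (b - x))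
        (maternF s (x - a) + maternF s (b - x)) x := by
    intro x hx
    have h1 := (maternG_hasDerivAt s hs (x - a)).comp x ((hasDerivAt_id x).sub_const a)
    have h2 := (maternG_hasDerivAt s hs (b - x)).comp x ((hasDerivAt_id x).const_sub b)
    have h3 := h1.sub h2
    exact h3.congr_deriv (by ring)
  have hint : IntervalIntegrable (fun x => maternF s (x - a) + maternF s (b - x))
      MeasureTheory.volume a b := by
    apply Continuous.intervalIntegrable
    unfold maternF
    fun_prop
  rw [intervalIntegral.integral_eq_sub_of_hasDerivAt hd hint]
  ring

/-- Initial error of the Matérn-5/2 kernel with respect to the uniform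
distribution on `[a, b]`. -/
theorem matern_five_half_initial_error
    (γ a b : ℝ) (hγ : 0 < γ) (hab : a < b) :
    (∫ ω in a..b, ∫ ω' in a..b,
        (1 + Real.sqrt 5 * |ω - ω'| / γ + 5 * (ω - ω') ^ 2 / (3 * γ ^ 2)) *
          Real.exp (-(Real.sqrt 5) * |ω - ω'| / γ) * ((b - a) ^ 2)⁻¹)
      = 2 * ((b - a) ^ 2)⁻¹ *
          (8 * Real.sqrt 5 * (b - a) * γ - 15 * γ ^ 2 +
            Real.exp (-(Real.sqrt 5) * (b - a) / γ) *
              (5 * (b - a) ^ 2 + 7 * Real.sqrt 5 * (b - a) * γ + 15 * γ ^ 2))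
          / 15 := by
  set s : ℝ := Real.sqrt 5 / γ with hs_def
  have h5 : Real.sqrt 5 ^ 2 = 5 := Real.sq_sqrt (by norm_num)
  have h5pos : (0:ℝ) < Real.sqrt 5 := Real.sqrt_pos.mpr (by norm_num)
  have hs : 0 < s := div_pos h5pos hγ
  have hsne : s ≠ 0 := ne_of_gt hs
  have hγne : γ ≠ 0 := ne_of_gt hγ
  have hkey : ∀ ω ω' : ℝ,
      (1 + Real.sqrt 5 * |ω - ω'| / γ + 5 * (ω - ω') ^ 2 / (3 * γ ^ 2)) *
          Real.exp (-(Real.sqrt 5) * |ω - ω'| / γ)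
        = maternK s |ω - ω'| := by
    intro ω ω'
    unfold maternK
    rw [hs_def]
    rw [show -(Real.sqrt 5) * |ω - ω'| / γ = -(Real.sqrt 5 / γ * |ω - ω'|) by ring]
    congr 1
    rw [div_pow, h5, sq_abs]
    field_simp
  have hinner : ∀ ω ∈ Set.uIcc a b,
      (∫ ω' in a..b,
        (1 + Real.sqrt 5 * |ω - ω'| / γ + 5 * (ω - ω') ^ 2 / (3 * γ ^ 2)) *
          Real.exp (-(Real.sqrt 5) * |ω - ω'| / γ) * ((b - a) ^ 2)⁻¹)
        = (maternF s (ω - a) + maternF s (b - ω)) * ((b - a) ^ 2)⁻¹ := by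
    intro ω hω
    rw [Set.uIcc_of_le (le_of_lt hab)] at hω
    rw [intervalIntegral.integral_mul_const]
    congr 1
    calc (∫ ω' in a..b,
        (1 + Real.sqrt 5 * |ω - ω'| / γ + 5 * (ω - ω') ^ 2 / (3 * γ ^ 2)) *
          Real.exp (-(Real.sqrt 5) * |ω - ω'| / γ))
        = ∫ ω' in a..b, maternK s |ω - ω'| := by
          apply intervalIntegral.integral_congr
          intro x _
          exact hkey ω x
      _ = maternF s (ω - a) + maternF s (b - ω) :=
          matern_inner s a b ω hsne hω.1 hω.2
  rw [intervalIntegral.integral_congr hinner, intervalIntegral.integral_mul_const,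
    matern_outer s a b hsne (le_of_lt hab)]
  unfold maternG
  rw [show -(s * (b - a)) = -(Real.sqrt 5) * (b - a) / γ by rw [hs_def]; ring]
  simp only [mul_zero, neg_zero, zero_mul, Real.exp_zero]
  have hba : b - a ≠ 0 := sub_ne_zero.mpr (ne_of_gt hab)
  rw [hs_def, div_pow, h5]
  field_simp
  ring_nf
  rw [h5]
  ring
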